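/- For every n ≥ 2, the space ℂⁿ is not of E_FS-limit type, where E_FS is the Fubini–Study length function on ℂⁿ: there exists a sequence of holomorphic maps F = {f_m} from the unit disc Δ to ℂⁿ that is not normal and not compactly divergent, and for which there do NOT exist sequences p_j ∈ Δ with p_j → p₀ ∈ Δ, maps f_j ∈ F, and ρ_j > 0 with ρ_j → 0⁺ such that g_j(ξ) := f_j(p_j + ρ_j ξ) converges uniformly on every compact subset of ℂ to a non-constant holomorphic curve g : ℂ → ℂⁿ with sup_{ξ∈ℂ} E_FS(g(ξ), g'(ξ)) < ∞. -/

import Mathlib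

set_option maxHeartbeats 1000000

open Filter Topology Metric

/-- The Fubini–Study length function on `ℂⁿ` (pullback of the Fubini–Study metric on
`ℙⁿ(ℂ)` under the standard affine chart):
`E_FS(z,v) = sqrt(((1+‖z‖²)‖v‖² − |⟨v,z⟩|²)/(1+‖z‖²)²)`. -/
noncomputable def fubiniStudyLength {n : ℕ} (z v : EuclideanSpace ℂ (Fin n)) : ℝ :=
  Real.sqrt (((1 + ‖z‖ ^ 2) * ‖v‖ ^ 2 - ‖(inner ℂ v z : ℂ)‖ ^ 2) / (1 + ‖z‖ ^ 2) ^ 2)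

section Aux
open Complex

noncomputable def v2 {n : ℕ} (h1 : 1 < n) (a b : ℂ) : EuclideanSpace ℂ (Fin n) :=
  WithLp.toLp 2 (fun i : Fin n => if i = ⟨0, by omega⟩ then a else if i = ⟨1, h1⟩ then b else 0)

variable {n : ℕ} (h1 : 1 < n)

lemma v2_ne : (⟨0, by omega⟩ : Fin n) ≠ ⟨1, h1⟩ := by simp

lemma v2_apply0 (a b : ℂ) : v2 h1 a b ⟨0, by omega⟩ = a := by simp [v2]

lemma v2_apply1 (a b : ℂ) : v2 h1 a b ⟨1, h1⟩ = b := by simp [v2, (v2_ne h1).symm]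

lemma v2_smul_repr (a b : ℂ) :
    v2 h1 a b = a • v2 h1 1 0 + b • v2 h1 0 1 := by
  ext i
  simp only [v2, PiLp.add_apply, PiLp.smul_apply, PiLp.toLp_apply, smul_eq_mul]
  split_ifs <;> ring

lemma v2_hasDerivAt {a b : ℂ → ℂ} {a' b' : ℂ} {x : ℂ}
    (ha : HasDerivAt a a' x) (hb : HasDerivAt b b' x) :
    HasDerivAt (fun z => v2 h1 (a z) (b z)) (v2 h1 a' b') x := by
  have h := (ha.smul_const (v2 h1 1 0)).add (hb.smul_const (v2 h1 0 1))
  have e : (fun z => v2 h1 (a z) (b z))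
      = fun z => a z • v2 h1 1 0 + b z • v2 h1 0 1 := funext fun z => v2_smul_repr h1 _ _
  rw [e, v2_smul_repr h1 a' b']
  exact h

lemma v2_continuous : Continuous (fun q : ℂ × ℂ => v2 h1 q.1 q.2) := by
  have e : (fun q : ℂ × ℂ => v2 h1 q.1 q.2)
      = fun q : ℂ × ℂ => q.1 • v2 h1 1 0 + q.2 • v2 h1 0 1 := funext fun q => v2_smul_repr h1 _ _
  rw [e]; fun_prop

lemma v2_inner (a b c d : ℂ) :
    (inner ℂ (v2 h1 a b) (v2 h1 c d) : ℂ) = (starRingEnd ℂ) a * c + (starRingEnd ℂ) b * d := by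
  rw [PiLp.inner_apply]
  rw [Fintype.sum_eq_add (⟨0, by omega⟩ : Fin n) ⟨1, h1⟩ (v2_ne h1)
    (f := fun i => (inner ℂ ((v2 h1 a b) i) ((v2 h1 c d) i) : ℂ)) ?_]
  · simp [v2_apply0, v2_apply1, RCLike.inner_apply]; ring
  · intro i hi
    simp only [v2, if_neg hi.1, if_neg hi.2]
    simp

lemma v2_norm_sq (a b : ℂ) : ‖v2 h1 a b‖ ^ 2 = ‖a‖ ^ 2 + ‖b‖ ^ 2 := by
  have h : (inner ℂ (v2 h1 a b) (v2 h1 a b) : ℂ) = (‖v2 h1 a b‖ : ℂ) ^ 2 :=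
    inner_self_eq_norm_sq_to_K _
  rw [v2_inner] at h
  have ha : (starRingEnd ℂ) a * a = ((‖a‖ ^ 2 : ℝ) : ℂ) := by
    rw [mul_comm, Complex.mul_conj, Complex.normSq_eq_norm_sq]
  have hb : (starRingEnd ℂ) b * b = ((‖b‖ ^ 2 : ℝ) : ℂ) := by
    rw [mul_comm, Complex.mul_conj, Complex.normSq_eq_norm_sq]
  rw [ha, hb] at h
  exact_mod_cast h.symm

end Aux

/-- **`ℂⁿ` (n ≥ 2) is not of `E_FS`-limit type.**
There is a family `{f m}` of holomorphic maps from the unit disc to `ℂⁿ` which is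
not normal and not compactly divergent, but for which no rescaled sequence
`ξ ↦ f (idx j) (p j + ρ j • ξ)` (with `p j → p₀` in the disc, `ρ j → 0⁺`)
converges uniformly on compact subsets of `ℂ` to a non-constant holomorphic curve
with bounded Fubini–Study derivative. -/
theorem stmt3 (n : ℕ) (hn : 2 ≤ n) :
    ∃ f : ℕ → ℂ → EuclideanSpace ℂ (Fin n),
      -- each member is holomorphic on the unit disc
      (∀ m, DifferentiableOn ℂ (f m) (ball (0 : ℂ) 1)) ∧
      -- the family is not normal
      (¬ ∀ s : ℕ → ℕ, ∃ (σ : ℕ → ℕ) (g : ℂ → EuclideanSpace ℂ (Fin n)), StrictMono σ ∧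
          DifferentiableOn ℂ g (ball (0 : ℂ) 1) ∧
          ∀ K ⊆ ball (0 : ℂ) 1, IsCompact K →
            TendstoUniformlyOn (fun j => f (s (σ j))) g atTop K) ∧
      -- the family is not compactly divergent
      (¬ ∃ s : ℕ → ℕ, ∀ K ⊆ ball (0 : ℂ) 1, IsCompact K →
          ∀ L : Set (EuclideanSpace ℂ (Fin n)), IsCompact L →
            ∀ᶠ j in atTop, ∀ x ∈ K, f (s j) x ∉ L) ∧
      -- but no rescaled sequence converges to a non-constant E_FS-Brody curve
      ¬ ∃ (p : ℕ → ℂ) (p₀ : ℂ) (idx : ℕ → ℕ) (ρ : ℕ → ℝ)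
          (g : ℂ → EuclideanSpace ℂ (Fin n)),
          (∀ j, p j ∈ ball (0 : ℂ) 1) ∧ p₀ ∈ ball (0 : ℂ) 1 ∧
          Tendsto p atTop (𝓝 p₀) ∧
          (∀ j, 0 < ρ j) ∧ Tendsto ρ atTop (𝓝 0) ∧
          Differentiable ℂ g ∧
          (¬ ∃ c, ∀ ξ : ℂ, g ξ = c) ∧
          (∃ C : ℝ, ∀ ξ : ℂ, fubiniStudyLength (g ξ) (deriv g ξ) ≤ C) ∧
          (∀ K : Set ℂ, IsCompact K →
            TendstoUniformlyOn (fun j ξ => f (idx j) (p j + (ρ j : ℂ) * ξ)) g atTop K) := by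
  have h1 : 1 < n := hn
  refine ⟨fun m z => v2 h1 ((m : ℂ) * z) (Complex.exp (((m : ℂ) * z) ^ 2)), ?_, ?_, ?_, ?_⟩
  · -- holomorphy
    intro m
    apply Differentiable.differentiableOn
    intro z
    have ha : HasDerivAt (fun z : ℂ => (m : ℂ) * z) ((m : ℂ) * 1) z := (hasDerivAt_id z).const_mul _
    have hb := (ha.pow 2).cexp
    exact (v2_hasDerivAt h1 ha hb).differentiableAt
  · -- not normal
    intro hnor
    obtain ⟨σ, g, hσ, -, hconv⟩ := hnor id
    have hsub : {(1/2 : ℂ)} ⊆ ball (0 : ℂ) 1 := by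
      simp only [Set.singleton_subset_iff, mem_ball, dist_eq_norm]; norm_num
    have h := (hconv _ hsub isCompact_singleton).tendsto_at (Set.mem_singleton _)
    have h2 : Tendsto (fun j => (((σ j : ℕ) : ℂ) * (1/2))) atTop (𝓝 (g (1/2) ⟨0, by omega⟩)) := by
      have := ((EuclideanSpace.proj (𝕜 := ℂ) (⟨0, by omega⟩ : Fin n)).continuous.tendsto _).comp h
      simpa [v2_apply0, Function.comp_def] using this
    have h3 : Tendsto (fun j => ‖(((σ j : ℕ) : ℂ) * (1/2))‖) atTop atTop := by
      have hle : ∀ j : ℕ, (j : ℝ) / 2 ≤ ‖(((σ j : ℕ) : ℂ) * (1/2 : ℂ))‖ := by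
        intro j
        rw [norm_mul]
        simp only [Complex.norm_natCast]
        rw [show ‖(1/2 : ℂ)‖ = 1/2 by norm_num]
        have : (j : ℝ) ≤ (σ j : ℝ) := by exact_mod_cast hσ.le_apply
        linarith
      have hd : Tendsto (fun j : ℕ => (j : ℝ) / 2) atTop atTop :=
        tendsto_natCast_atTop_atTop.atTop_div_const (by norm_num)
      exact tendsto_atTop_mono hle hd
    exact not_tendsto_atTop_of_tendsto_nhds h2.norm h3
  · -- not compactly divergent
    rintro ⟨s, h⟩
    have hsub : {(0 : ℂ)} ⊆ ball (0 : ℂ) 1 := by simp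
    have h2 := h _ hsub isCompact_singleton {v2 h1 0 1} isCompact_singleton
    obtain ⟨j, hj⟩ := h2.exists
    exact hj 0 rfl (by simp [v2])
  · -- no Brody-type rescaling limit
    set f : ℕ → ℂ → EuclideanSpace ℂ (Fin n) :=
      fun m z => v2 h1 ((m : ℂ) * z) (Complex.exp (((m : ℂ) * z) ^ 2)) with hf
    rintro ⟨p, p₀, idx, ρ, g, -, -, -, -, -, -, hgnc, ⟨C, hC⟩, hconv⟩
    -- pointwise convergence
    have hpt : ∀ ξ : ℂ, Tendsto (fun j => f (idx j) (p j + (ρ j : ℂ) * ξ)) atTop (𝓝 (g ξ)) := by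
      intro ξ
      exact (hconv {ξ} isCompact_singleton).tendsto_at (Set.mem_singleton _)
    -- rewrite the argument
    have harg : ∀ (j : ℕ) (ξ : ℂ), f (idx j) (p j + (ρ j : ℂ) * ξ)
        = v2 h1 ((idx j : ℂ) * p j + ((idx j : ℂ) * (ρ j : ℂ)) * ξ)
            (Complex.exp (((idx j : ℂ) * p j + ((idx j : ℂ) * (ρ j : ℂ)) * ξ) ^ 2)) := by
      intro j ξ
      rw [hf]
      ring_nf
    set a : ℕ → ℂ := fun j => (idx j : ℂ) * p j with ha
    set b : ℕ → ℂ := fun j => (idx j : ℂ) * (ρ j : ℂ) with hb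
    -- first coordinate pointwise limits
    have hco : ∀ ξ : ℂ, Tendsto (fun j => a j + b j * ξ) atTop (𝓝 (g ξ ⟨0, by omega⟩)) := by
      intro ξ
      have := ((EuclideanSpace.proj (𝕜 := ℂ) (⟨0, by omega⟩ : Fin n)).continuous.tendsto _).comp (hpt ξ)
      refine this.congr fun j => ?_
      simp only [Function.comp_apply, PiLp.proj_apply]
      rw [harg j ξ, v2_apply0]
    set A : ℂ := g 0 ⟨0, by omega⟩ with hA
    have haA : Tendsto a atTop (𝓝 A) := by
      have := hco 0
      simpa using this
    set B : ℂ := g 1 ⟨0, by omega⟩ - A with hBdef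
    have hbB : Tendsto b atTop (𝓝 B) := by
      have h01 := hco 1
      have : Tendsto (fun j => (a j + b j * 1) - a j) atTop (𝓝 (g 1 ⟨0, by omega⟩ - A)) :=
        h01.sub haA
      simpa using this
    -- identify g
    have hg : ∀ ξ : ℂ, g ξ = v2 h1 (A + B * ξ) (Complex.exp ((A + B * ξ) ^ 2)) := by
      intro ξ
      have hlim : Tendsto (fun j => v2 h1 (a j + b j * ξ) (Complex.exp ((a j + b j * ξ) ^ 2)))
          atTop (𝓝 (v2 h1 (A + B * ξ) (Complex.exp ((A + B * ξ) ^ 2)))) := by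
        have hc : Tendsto (fun j => a j + b j * ξ) atTop (𝓝 (A + B * ξ)) :=
          haA.add (hbB.mul_const ξ)
        have hq : Tendsto (fun j => (⟨a j + b j * ξ, Complex.exp ((a j + b j * ξ) ^ 2)⟩ : ℂ × ℂ))
            atTop (𝓝 (⟨A + B * ξ, Complex.exp ((A + B * ξ) ^ 2)⟩ : ℂ × ℂ)) :=
          hc.prodMk_nhds ((Complex.continuous_exp.tendsto _).comp (hc.pow 2))
        exact ((v2_continuous h1).tendsto _).comp hq
      refine tendsto_nhds_unique ?_ hlim
      have := hpt ξ
      simpa [funext fun j => harg j ξ] using this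
    -- case split on B
    by_cases hB0 : B = 0
    · exact hgnc ⟨v2 h1 A (Complex.exp (A ^ 2)), fun ξ => by rw [hg ξ, hB0]; simp⟩
    -- derivative of g
    have hgder : ∀ ξ : ℂ, deriv g ξ
        = v2 h1 B (Complex.exp ((A + B * ξ) ^ 2) * (2 * (A + B * ξ) * B)) := by
      intro ξ
      have hgeq : g = fun ξ => v2 h1 (A + B * ξ) (Complex.exp ((A + B * ξ) ^ 2)) := funext hg
      have hu : HasDerivAt (fun ξ : ℂ => A + B * ξ) B ξ := by
        simpa using ((hasDerivAt_id ξ).const_mul B).const_add A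
      have hexp : HasDerivAt (fun ξ : ℂ => Complex.exp ((A + B * ξ) ^ 2))
          (Complex.exp ((A + B * ξ) ^ 2) * (2 * (A + B * ξ) * B)) ξ := by
        have := (hu.pow 2).cexp
        simpa using this
      have := (v2_hasDerivAt h1 hu hexp).deriv
      rw [← hgeq] at this
      exact this
    -- choose the bad point
    have hBpos : 0 < ‖B‖ := norm_pos_iff.mpr hB0
    set s : ℝ := max 3 (4 * (|C| + 1) / ‖B‖) with hsdef
    have hs3 : (3 : ℝ) ≤ s := le_max_left _ _
    have hspos : (0 : ℝ) < s := by linarith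
    have hsC : |C| + 1 ≤ ‖B‖ * s / 4 := by
      have h := le_max_right 3 (4 * (|C| + 1) / ‖B‖)
      rw [div_le_iff₀ hBpos] at h
      rw [← hsdef] at h
      nlinarith
    set m : ℝ := Real.log s with hmdef
    have hm1 : 1 ≤ m := by
      rw [hmdef, Real.le_log_iff_exp_le hspos]
      have := Real.exp_one_lt_d9
      linarith
    have hms : m ≤ s := Real.log_le_self (le_of_lt hspos)
    set ζ : ℂ := (m : ℂ) + (s ^ 2 : ℝ) * Complex.I with hζdef
    have hζre : ζ.re = m := by
      rw [hζdef, Complex.add_re, Complex.ofReal_re, Complex.mul_re, Complex.ofReal_re,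
        Complex.ofReal_im, Complex.I_re, Complex.I_im]; ring
    have hζim : ζ.im = s ^ 2 := by
      rw [hζdef, Complex.add_im, Complex.ofReal_im, Complex.mul_im, Complex.ofReal_re,
        Complex.ofReal_im, Complex.I_re, Complex.I_im]; ring
    obtain ⟨w, hw⟩ := IsAlgClosed.exists_pow_nat_eq ζ (n := 2) (by norm_num)
    set ξ : ℂ := (w - A) / B with hξdef
    have hwξ : A + B * ξ = w := by
      rw [hξdef]; field_simp; ring
    have hre : (w ^ 2).re = m := by rw [hw]; exact hζre
    set u : ℂ := Complex.exp (w ^ 2) with hudef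
    have hu : ‖u‖ = s := by
      rw [hudef, Complex.norm_exp, hre, hmdef]
      exact Real.exp_log hspos
    set Q : ℝ := ‖w‖ ^ 2 with hQdef
    have hQζ : Q = ‖ζ‖ := by
      rw [hQdef, ← norm_pow, hw]
    have hQge : s ^ 2 ≤ Q := by
      have h := Complex.abs_im_le_norm ζ
      rw [hζim] at h
      rw [hQζ]
      calc s ^ 2 ≤ |s ^ 2| := le_abs_self _
      _ ≤ ‖ζ‖ := h
    have hQle : Q ≤ m + s ^ 2 := by
      have h := Complex.norm_le_abs_re_add_abs_im ζ
      rw [hζre, hζim, _root_.abs_of_nonneg (by linarith : (0:ℝ) ≤ m),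
        _root_.abs_of_nonneg (by positivity : (0:ℝ) ≤ s ^ 2)] at h
      rw [hQζ]; exact h
    -- the point and its values
    have hz : g ξ = v2 h1 w u := by rw [hg ξ, hwξ, hudef]
    have hv : deriv g ξ = v2 h1 B (u * (2 * w * B)) := by
      rw [hgder ξ, hwξ, hudef]
    -- norms
    have nz : ‖g ξ‖ ^ 2 = Q + s ^ 2 := by
      rw [hz, v2_norm_sq, hQdef, hu]
    have nv : ‖deriv g ξ‖ ^ 2 = ‖B‖ ^ 2 + s ^ 2 * (4 * Q * ‖B‖ ^ 2) := by
      rw [hv, v2_norm_sq]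
      rw [norm_mul, norm_mul, norm_mul, hu]
      simp only [Complex.norm_ofNat]
      rw [hQdef]; ring
    have huu : (starRingEnd ℂ) u * u = ((s ^ 2 : ℝ) : ℂ) := by
      rw [mul_comm, Complex.mul_conj, Complex.normSq_eq_norm_sq, hu]
    have hinner : (inner ℂ (deriv g ξ) (g ξ) : ℂ)
        = (starRingEnd ℂ) B * (w + ((2 * s ^ 2 : ℝ) : ℂ) * (starRingEnd ℂ) w) := by
      rw [hz, hv, v2_inner]
      have : (starRingEnd ℂ) (u * (2 * w * B)) * u
          = ((starRingEnd ℂ) u * u) * (2 * (starRingEnd ℂ) w * (starRingEnd ℂ) B) := by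
        simp only [map_mul, map_ofNat]; ring
      rw [this, huu]
      push_cast
      ring
    have hwsum : ‖w + ((2 * s ^ 2 : ℝ) : ℂ) * (starRingEnd ℂ) w‖ ^ 2
        = Q + 4 * (s ^ 2) ^ 2 * Q + 4 * s ^ 2 * m := by
      rw [Complex.sq_norm, Complex.normSq_add]
      rw [Complex.normSq_mul, Complex.normSq_conj, Complex.normSq_ofReal]
      have h2 : (w * (starRingEnd ℂ) (((2 * s ^ 2 : ℝ) : ℂ) * (starRingEnd ℂ) w)).re
          = 2 * s ^ 2 * (w ^ 2).re := by
        simp only [map_mul, Complex.conj_conj, Complex.conj_ofReal]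
        rw [show w * (((2 * s ^ 2 : ℝ) : ℂ) * w) = ((2 * s ^ 2 : ℝ) : ℂ) * w ^ 2 by ring]
        rw [Complex.re_ofReal_mul]
      rw [h2, hre]
      have hnsq : Complex.normSq w = Q := by
        rw [hQdef, Complex.normSq_eq_norm_sq]
      rw [hnsq]; ring
    have ninner : ‖(inner ℂ (deriv g ξ) (g ξ) : ℂ)‖ ^ 2
        = ‖B‖ ^ 2 * (Q + 4 * (s ^ 2) ^ 2 * Q + 4 * s ^ 2 * m) := by
      rw [hinner, norm_mul, mul_pow, RCLike.norm_conj, hwsum]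
    -- the key inequality
    have hmain : s ^ 2 * (1 + Q + s ^ 2) ^ 2
        ≤ 16 * (1 + s ^ 2 + 4 * Q * s ^ 2 + 4 * Q ^ 2 * s ^ 2 - 4 * s ^ 2 * m) := by
      have hQ0 : (0:ℝ) ≤ Q := le_trans (sq_nonneg s) hQge
      have hub : 1 + Q + s ^ 2 ≤ 3 * s ^ 2 := by nlinarith
      have hnn : (0:ℝ) ≤ 1 + Q + s ^ 2 := by positivity
      have h1' : s ^ 2 * (1 + Q + s ^ 2) ^ 2 ≤ s ^ 2 * (3 * s ^ 2) ^ 2 :=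
        mul_le_mul_of_nonneg_left (pow_le_pow_left₀ hnn hub 2) (sq_nonneg s)
      have hQQ : (s ^ 2) * (s ^ 2) ≤ Q * Q :=
        mul_self_le_mul_self (sq_nonneg s) hQge
      have t1 : s ^ 2 * s ^ 2 * s ^ 2 ≤ Q * Q * s ^ 2 :=
        mul_le_mul_of_nonneg_right hQQ (sq_nonneg s)
      have t2 : s ^ 2 * m ≤ s ^ 2 * s :=
        mul_le_mul_of_nonneg_left hms (sq_nonneg s)
      have t3 : s ^ 2 * s ^ 2 ≤ Q * s ^ 2 :=
        mul_le_mul_of_nonneg_right hQge (sq_nonneg s)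
      have t5 : (0:ℝ) ≤ s * s * s := by positivity
      have hc : (27:ℝ) ≤ s * s * s := by
        calc (27:ℝ) = 3 * 3 * 3 := by norm_num
        _ ≤ s * s * s := by
            have h3 : (0:ℝ) ≤ 3 := by norm_num
            gcongr <;> linarith
      have hs27 : 27 * (s * s * s) ≤ (s * s * s) * (s * s * s) :=
        mul_le_mul_of_nonneg_right hc t5
      have h2' : s ^ 2 * (3 * s ^ 2) ^ 2
          ≤ 16 * (1 + s ^ 2 + 4 * Q * s ^ 2 + 4 * Q ^ 2 * s ^ 2 - 4 * s ^ 2 * m) := by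
        nlinarith [t1, t2, t3, hs27, t5, sq_nonneg s]
      linarith
    have key2 : (‖B‖ * s / 4) ^ 2 * (1 + (Q + s ^ 2)) ^ 2
        ≤ (1 + (Q + s ^ 2)) * (‖B‖ ^ 2 + s ^ 2 * (4 * Q * ‖B‖ ^ 2))
          - ‖B‖ ^ 2 * (Q + 4 * (s ^ 2) ^ 2 * Q + 4 * s ^ 2 * m) := by
      nlinarith [mul_le_mul_of_nonneg_left hmain (by positivity : (0:ℝ) ≤ ‖B‖ ^ 2 / 16)]
    have key : (‖B‖ * s / 4) ^ 2
        ≤ ((1 + ‖g ξ‖ ^ 2) * ‖deriv g ξ‖ ^ 2 - ‖(inner ℂ (deriv g ξ) (g ξ) : ℂ)‖ ^ 2)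
          / (1 + ‖g ξ‖ ^ 2) ^ 2 := by
      rw [nz, nv, ninner, le_div_iff₀ (by positivity)]
      linarith [key2]
    have hfs : ‖B‖ * s / 4 ≤ fubiniStudyLength (g ξ) (deriv g ξ) := by
      rw [fubiniStudyLength]
      calc ‖B‖ * s / 4 = Real.sqrt ((‖B‖ * s / 4) ^ 2) :=
            (Real.sqrt_sq (by positivity)).symm
      _ ≤ _ := Real.sqrt_le_sqrt key
    have := hC ξ
    have : C < fubiniStudyLength (g ξ) (deriv g ξ) := by
      have hCabs : C ≤ |C| := le_abs_self C
      linarith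
    linarith [hC ξ]
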